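/- Let T be a finite tree, let f be a locating k-coloring of T, let x be a vertex of T, and let p be the number of distinct colors appearing on the neighbors of x. Then for every color i appearing on a neighbor of x, the number of neighbors of x receiving color i is at most 2^(p-1)·3^(k-1-p). -/
import Mathlib


/-- A proper `k`-coloring of `G`: a function onto the `k` colors such that
adjacent vertices receive different colors. -/
def IsProperColoring {V : Type*} (G : SimpleGraph V) (k : ℕ) (f : V → Fin k) : Prop :=
  Function.Surjective f ∧ ∀ u v : V, G.Adj u v → f u ≠ f v

/-- The color code of a vertex `v`: its `i`-th coordinate is the distance from `v`
to the color class `f⁻¹(i)`. -/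
noncomputable def colorCode {V : Type*} (G : SimpleGraph V) {k : ℕ} (f : V → Fin k)
    (v : V) : Fin k → ℕ :=
  fun i => sInf {n : ℕ | ∃ u : V, f u = i ∧ G.dist v u = n}

/-- A locating `k`-coloring: a proper `k`-coloring in which distinct vertices have
distinct color codes. -/
def IsLocatingColoring {V : Type*} (G : SimpleGraph V) (k : ℕ) (f : V → Fin k) : Prop :=
  IsProperColoring G k f ∧ Function.Injective (colorCode G f)

/-- The locating chromatic number: the least `k` admitting a locating `k`-coloring. -/
noncomputable def locatingChromaticNumber {V : Type*} (G : SimpleGraph V) : ℕ :=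
  sInf {k : ℕ | ∃ f : V → Fin k, IsLocatingColoring G k f}

section Aux
variable {V : Type*} {G : SimpleGraph V} {k : ℕ} {f : V → Fin k}

lemma code_le (y u : V) {j : Fin k} (h : f u = j) : colorCode G f y j ≤ G.dist y u :=
  Nat.sInf_le ⟨u, h, rfl⟩

lemma code_witness (hs : Function.Surjective f) (y : V) (j : Fin k) :
    ∃ u : V, f u = j ∧ G.dist y u = colorCode G f y j := by
  obtain ⟨u, hu⟩ := hs j
  have hne : {n : ℕ | ∃ u : V, f u = j ∧ G.dist y u = n}.Nonempty :=
    ⟨G.dist y u, u, hu, rfl⟩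
  exact Nat.sInf_mem hne

lemma code_self (y : V) : colorCode G f y (f y) = 0 :=
  Nat.le_zero.mp (by
    have h := code_le (G := G) (f := f) y y rfl
    rwa [SimpleGraph.dist_self] at h)

lemma code_pos (hs : Function.Surjective f) (hc : G.Connected) (y : V) {j : Fin k}
    (h : f y ≠ j) : 1 ≤ colorCode G f y j := by
  obtain ⟨u, hu, hd⟩ := code_witness hs y j
  rcases Nat.eq_zero_or_pos (colorCode G f y j) with h0 | h1
  · rw [h0] at hd
    exact absurd (hc.dist_eq_zero_iff.mp hd ▸ hu) h
  · exact h1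

lemma code_step (hs : Function.Surjective f) (hc : G.Connected) {x y : V}
    (hxy : G.Adj x y) (j : Fin k) : colorCode G f y j ≤ colorCode G f x j + 1 := by
  obtain ⟨u, hu, hd⟩ := code_witness hs x j
  calc colorCode G f y j ≤ G.dist y u := code_le y u hu
    _ ≤ G.dist y x + G.dist x u := hc.dist_triangle
    _ ≤ colorCode G f x j + 1 := by
        rw [SimpleGraph.dist_comm, (SimpleGraph.dist_eq_one_iff_adj).mpr hxy, hd]; omega

end Aux

/-- In a finite tree with a locating `k`-coloring, if `p` is the number of distinct
colors appearing on the neighbors of a vertex `x`, then for every color `i` appearing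
on a neighbor of `x`, the number of neighbors of `x` colored `i` is at most
`2^(p-1) * 3^(k-1-p)`. -/
theorem neighbors_with_color_le {V : Type*} [Fintype V] [DecidableEq V]
    (G : SimpleGraph V) [DecidableRel G.Adj] (hT : G.IsTree) (k : ℕ) (f : V → Fin k)
    (hf : IsLocatingColoring G k f) (x : V)
    (p : ℕ) (hp : p = ((G.neighborFinset x).image f).card)
    (i : Fin k) (hi : ∃ y ∈ G.neighborFinset x, f y = i) :
    ((G.neighborFinset x).filter (fun y => f y = i)).card ≤ 2 ^ (p - 1) * 3 ^ (k - 1 - p) := by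
  classical
  obtain ⟨⟨hs, hprop⟩, hinj⟩ := hf
  have hc : G.Connected := hT.1
  obtain ⟨y₀, hy₀, hfy₀⟩ := hi
  set S : Finset (Fin k) := (G.neighborFinset x).image f with hS
  have hiS : i ∈ S := Finset.mem_image.mpr ⟨y₀, hy₀, hfy₀⟩
  have hfxS : f x ∉ S := by
    intro h
    obtain ⟨z, hz, hfz⟩ := Finset.mem_image.mp h
    exact hprop x z (by simpa using hz) hfz.symm
  have hfxi : f x ≠ i := fun h => hfxS (h ▸ hiS)
  -- the target finset of possible color codes
  set c : Fin k → ℕ := colorCode G f x with hcdef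
  set A : Fin k → Finset ℕ := fun j =>
    if j = i then {0} else if j = f x then {1} else if j ∈ S then {1, 2}
    else {c j - 1, c j, c j + 1} with hA
  have key : ∀ y ∈ (G.neighborFinset x).filter (fun y => f y = i),
      colorCode G f y ∈ Fintype.piFinset A := by
    intro y hy
    rw [Finset.mem_filter, SimpleGraph.mem_neighborFinset] at hy
    obtain ⟨hadj, hfy⟩ := hy
    rw [Fintype.mem_piFinset]
    intro j
    simp only [hA]
    by_cases hji : j = i
    · rw [if_pos hji, Finset.mem_singleton, hji, ← hfy]
      exact code_self (G := G) (f := f) y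
    by_cases hjx : j = f x
    · rw [if_neg hji, if_pos hjx, Finset.mem_singleton, hjx]
      have h1 : colorCode G f y (f x) ≤ 1 := by
        have h := code_le (G := G) (f := f) y x rfl
        rwa [SimpleGraph.dist_comm, (SimpleGraph.dist_eq_one_iff_adj).mpr hadj] at h
      have h2 : 1 ≤ colorCode G f y (f x) :=
        code_pos hs hc y (fun h => hprop x y hadj (h.symm))
      omega
    by_cases hjS : j ∈ S
    · rw [if_neg hji, if_neg hjx, if_pos hjS, Finset.mem_insert, Finset.mem_singleton]
      obtain ⟨z, hz, hfz⟩ := Finset.mem_image.mp hjS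
      rw [SimpleGraph.mem_neighborFinset] at hz
      have h1 : colorCode G f y j ≤ 2 := by
        calc colorCode G f y j ≤ G.dist y z := code_le y z hfz
          _ ≤ G.dist y x + G.dist x z := hc.dist_triangle
          _ ≤ 2 := by
              rw [SimpleGraph.dist_comm, (SimpleGraph.dist_eq_one_iff_adj).mpr hadj,
                (SimpleGraph.dist_eq_one_iff_adj).mpr hz]
      have h2 : 1 ≤ colorCode G f y j :=
        code_pos hs hc y (fun h => hji (by rw [← hfy, h]))
      omega
    · rw [if_neg hji, if_neg hjx, if_neg hjS, Finset.mem_insert, Finset.mem_insert,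
        Finset.mem_singleton]
      have h1 : colorCode G f y j ≤ c j + 1 := code_step hs hc hadj j
      have h2 : c j ≤ colorCode G f y j + 1 := code_step hs hc hadj.symm j
      omega
  have hcard : ((G.neighborFinset x).filter (fun y => f y = i)).card
      ≤ (Fintype.piFinset A).card := by
    apply Finset.card_le_card_of_injOn (colorCode G f) key
    intro a _ b _ hab
    exact hinj hab
  refine hcard.trans ?_
  rw [Fintype.card_piFinset]
  -- split the product
  have hcalc : ∏ j : Fin k, (A j).card ≤ 2 ^ (p - 1) * 3 ^ (k - 1 - p) := by
    have hsplit : (Finset.univ : Finset (Fin k)) = (insert (f x) S) ∪ (insert (f x) S)ᶜ :=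
      (Finset.union_compl _).symm
    rw [Finset.prod_congr hsplit (fun _ _ => rfl),
      Finset.prod_union disjoint_compl_right]
    have h1 : ∏ j ∈ insert (f x) S, (A j).card ≤ 2 ^ (p - 1) := by
      rw [Finset.prod_insert hfxS]
      have hAfx : (A (f x)).card = 1 := by
        simp [hA, if_neg hfxi]
      rw [hAfx, one_mul]
      have hSsplit : S = insert i (S.erase i) := (Finset.insert_erase hiS).symm
      rw [Finset.prod_congr hSsplit (fun _ _ => rfl),
        Finset.prod_insert (Finset.notMem_erase i S)]
      have hAi : (A i).card = 1 := by simp only [hA]; simp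
      rw [hAi, one_mul]
      calc ∏ j ∈ S.erase i, (A j).card ≤ ∏ j ∈ S.erase i, 2 := by
            apply Finset.prod_le_prod (fun _ _ => Nat.zero_le _)
            intro j hj
            have hji : j ≠ i := Finset.ne_of_mem_erase hj
            have hjS : j ∈ S := Finset.mem_of_mem_erase hj
            have hjx : j ≠ f x := fun h => hfxS (h ▸ hjS)
            simp only [hA]; simp only [if_neg hji, if_neg hjx, if_pos hjS]
            exact Finset.card_insert_le _ _ |>.trans (by simp)
        _ = 2 ^ (p - 1) := by
            rw [Finset.prod_const, Finset.card_erase_of_mem hiS, hp]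
    have h2 : ∏ j ∈ (insert (f x) S)ᶜ, (A j).card ≤ 3 ^ (k - 1 - p) := by
      calc ∏ j ∈ (insert (f x) S)ᶜ, (A j).card ≤ ∏ j ∈ (insert (f x) S)ᶜ, 3 := by
            apply Finset.prod_le_prod (fun _ _ => Nat.zero_le _)
            intro j hj
            rw [Finset.mem_compl, Finset.mem_insert] at hj
            push_neg at hj
            obtain ⟨hjx, hjS⟩ := hj
            have hji : j ≠ i := fun h => hjS (h ▸ hiS)
            simp only [hA]; simp only [if_neg hji, if_neg hjx, if_neg hjS]
            exact Finset.card_insert_le _ _ |>.trans (by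
              simpa using Nat.add_le_add_right (Finset.card_insert_le _ _) 1)
        _ ≤ 3 ^ (k - 1 - p) := by
            rw [Finset.prod_const]
            apply Nat.pow_le_pow_right (by norm_num)
            rw [Finset.card_compl, Finset.card_insert_of_notMem hfxS, ← hp]
            simp only [Fintype.card_fin]
            omega
    exact Nat.mul_le_mul h1 h2
  exact hcalc
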